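/- Define the level-of-fill level(i,j) := max{0, d_fill(i,j) − 1}, where d_fill(i,j) is the minimal number of edges on any fill path between i and j in the graph of a symmetric matrix H. Suppose in the incomplete factorization with pattern ifnz = {(i,j) ∈ fnz(H) : level(i,j) ≤ c}, a dropped entry E(i,j) ≠ 0 occurs only when (i,j) ∈ fnz(H)\ifnz(H) and there exists k < j with (i,k) ∈ ifnz(H) and (j,k) ∈ ifnz(H). Then every nonzero entry of E satisfies c < level(i,j) ≤ 2c + 1. -/

import Mathlib

open Matrix

/-- A fill path between `i` and `j` in the graph of a matrix `H`, recorded by its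
list `l` of interior vertices: all interior vertices are smaller than `min i j`.
Its length (number of edges) is `l.length + 1`; the level-of-fill of `(i,j)` is
at most `c` iff there is a fill path with `l.length ≤ c`. -/
def IsFillPath {n : ℕ} (H : Matrix (Fin n) (Fin n) ℂ) (i j : Fin n)
    (l : List (Fin n)) : Prop :=
  List.Chain' (fun u v : Fin n => H u v ≠ 0) (i :: (l ++ [j])) ∧
    ∀ v ∈ l, v < min i j

/-- `(i,j)` belongs to the truncated fill pattern `ifnz`: connected by a fill
path of level-of-fill at most `c`. -/
def Ifnz {n : ℕ} (H : Matrix (Fin n) (Fin n) ℂ) (c : ℕ) (i j : Fin n) : Prop :=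
  ∃ l, IsFillPath H i j l ∧ l.length ≤ c

/-- Every dropped entry `E(i,j) ≠ 0` of the incomplete
factorization with pattern `level ≤ c` satisfies `c < level(i,j) ≤ 2c + 1`:
it is a fill-in position of level greater than `c`, but admits a fill path of
level at most `2c + 1`. -/
theorem dropped_entry_level_bounds {n : ℕ} (H : Matrix (Fin n) (Fin n) ℂ)
    (hsymm : H.IsSymm) (c : ℕ) (E : Matrix (Fin n) (Fin n) ℂ)
    (hdrop : ∀ i j : Fin n, E i j ≠ 0 →
      j < i ∧ (∃ l, IsFillPath H i j l) ∧ ¬ Ifnz H c i j ∧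
        ∃ k : Fin n, k < j ∧ Ifnz H c i k ∧ Ifnz H c j k) :
    ∀ i j : Fin n, E i j ≠ 0 →
      (¬ Ifnz H c i j) ∧ ∃ l, IsFillPath H i j l ∧ l.length ≤ 2 * c + 1 := by
  intro i j hE
  obtain ⟨hji, -, hnifnz, k, hkj, ⟨l1, hp1, hlen1⟩, ⟨l2, hp2, hlen2⟩⟩ := hdrop i j hE
  refine ⟨hnifnz, l1 ++ k :: l2.reverse, ⟨?_, ?_⟩, ?_⟩
  · -- chain
    have key : (i :: ((l1 ++ k :: l2.reverse) ++ [j]))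
        = (i :: l1) ++ (k :: (l2.reverse ++ [j])) := by simp
    rw [key, List.Chain', List.isChain_append]
    have h1 : List.Chain' (fun u v : Fin n => H u v ≠ 0) ((i :: l1) ++ [k]) := by
      simpa using hp1.1
    rw [List.Chain', List.isChain_append] at h1
    have h2 : List.Chain' (fun u v : Fin n => H u v ≠ 0)
        (k :: (l2.reverse ++ [j])) := by
      have hrev : (k :: (l2.reverse ++ [j])) = (j :: (l2 ++ [k])).reverse := by simp
      rw [hrev, List.Chain', List.isChain_reverse]
      exact hp2.1.imp fun a b h => by
        show H b a ≠ 0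
        rwa [← hsymm.apply b a]
    refine ⟨h1.1, h2, ?_⟩
    intro x hx y hy
    simp only [List.head?_cons, Option.mem_def, Option.some.injEq] at hy
    subst hy
    exact h1.2.2 x hx k (by simp)
  · -- vertex bounds
    have hmin : min i j = j := min_eq_right hji.le
    intro v hv
    rw [hmin]
    simp only [List.mem_append, List.mem_cons, List.mem_reverse] at hv
    rcases hv with h | h | h
    · exact lt_of_lt_of_le (hp1.2 v h) (le_trans (min_le_right i k) hkj.le)
    · exact h ▸ hkj
    · exact lt_trans (lt_of_lt_of_le (hp2.2 v h) (min_le_right j k)) hkj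
  · simp only [List.length_append, List.length_cons, List.length_reverse]
    omega
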